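/- arXiv:2212.04888 — 4 statements merged into one kernel-verified Lean document; each statement's English description precedes it below -/
import Mathlib

section
/- Let W be a torsion-free ℂ[[ħ]]-module and let β(z) = ∑_{m∈ℤ} β_m z^{-m-1} be a formal series with coefficients β_m ∈ W. Let f(z) = ∑_{i=0}^n a_i z^i ∈ ℂ[z] be monic of degree n, and let k ∈ ℤ. If the singular part (the terms with negative powers of z) of z^k · ħ^n f(z/ħ) · β(z) vanishes, then for every m ≥ k, β_m lies in the ℂ[[ħ]]-span of {β_i : k ≤ i < k+n}. Moreover, if β_i = 0 for all k ≤ i < k+n, then the singular part of z^k β(z) vanishes. -/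
/- STATEMENT 0: Lemma 5.2 of the paper.  `W` is a torsion-free `ℂ[[ħ]]`-module,
`β(z) = ∑ β_m z^{-m-1}` a formal series, `f` a monic polynomial of degree `n`.
If the singular part of `z^k · ħ^n f(z/ħ) · β(z)` vanishes (expressed
coefficientwise: the coefficient of `z^{-m-1}` is `∑_{i≤n} a_i ħ^{n-i} β_{m+k+i}`),
then every `β_m` with `m ≥ k` lies in the `ℂ[[ħ]]`-span of `β_i`, `k ≤ i < k+n`;
and if those `β_i` vanish then the singular part of `z^k β(z)` vanishes, i.e.
`β_m = 0` for all `m ≥ k`. -/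
theorem stmt0 (W : Type*) [AddCommGroup W] [Module (PowerSeries ℂ) W]
    (htorsionfree : ∀ w : W, w ≠ 0 → (PowerSeries.X : PowerSeries ℂ) • w ≠ 0)
    (n : ℕ) (a : ℕ → ℂ) (hmonic : a n = 1) (k : ℤ) (β : ℤ → W)
    (hsing : ∀ m : ℤ, 0 ≤ m →
      ∑ i ∈ Finset.range (n + 1),
        (PowerSeries.C (a i) * (PowerSeries.X : PowerSeries ℂ) ^ (n - i)) •
          β (m + k + (i : ℤ)) = 0) :
    (∀ m : ℤ, k ≤ m → β m ∈ Submodule.span (PowerSeries ℂ)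
        (β '' {i : ℤ | k ≤ i ∧ i < k + (n : ℤ)})) ∧
    ((∀ i : ℤ, k ≤ i → i < k + (n : ℤ) → β i = 0) → ∀ m : ℤ, k ≤ m → β m = 0) := by

  set S := Submodule.span (PowerSeries ℂ) (β '' {i : ℤ | k ≤ i ∧ i < k + (n : ℤ)}) with hS
  have key : ∀ d : ℕ, β (k + d) ∈ S := by
    intro d
    induction d using Nat.strong_induction_on with
    | _ d ih =>
      by_cases hd : d < n
      · exact Submodule.subset_span ⟨k + d, ⟨le_add_of_nonneg_right (by positivity), by omega⟩, rfl⟩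
      · push_neg at hd
        have h := hsing ((d : ℤ) - n) (by omega)
        rw [Finset.sum_range_succ] at h
        have he : (d : ℤ) - n + k + (n : ℤ) = k + d := by omega
        rw [he, hmonic, Nat.sub_self, pow_zero, mul_one] at h
        simp only [map_one, one_smul] at h
        have hβ : β (k + d) = - ∑ i ∈ Finset.range n,
            (PowerSeries.C (a i) * (PowerSeries.X : PowerSeries ℂ) ^ (n - i)) •
              β ((d : ℤ) - n + k + i) := by
          linear_combination (norm := abel) h
        rw [hβ]
        refine Submodule.neg_mem _ (Submodule.sum_mem _ fun i hi => Submodule.smul_mem _ _ ?_)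
        simp only [Finset.mem_range] at hi
        have he2 : (d : ℤ) - n + k + i = k + ((d - n + i : ℕ) : ℤ) := by
          push_cast; omega
        rw [he2]
        exact ih _ (by omega)
  constructor
  · intro m hm
    have : m = k + ((m - k).toNat : ℤ) := by omega
    rw [this]; exact key _
  · intro hvanish m hm
    have hle : S ≤ ⊥ := by
      rw [hS]
      refine Submodule.span_le.2 ?_
      rintro _ ⟨i, ⟨h1, h2⟩, rfl⟩
      simp [hvanish i h1 h2]
    have : m = k + ((m - k).toNat : ℤ) := by omega
    rw [this]
    exact (Submodule.mem_bot _).mp (hle (key _))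
end

section
/- For each integer i ≥ 0 define f_{-i}(z) = (1/(2·i!))·(-z d/dz)^i ((z+1)/(z-1)). Then ι_{z₁,z₂} f_{-i}(e^{z₁−z₂}) − ι_{z₂,z₁} f_{-i}(e^{z₁−z₂}) = (1/i!)·∂_{z₂}^i ( z₁^{-1} δ(z₂/z₁) ), where δ(z)=∑_{n∈ℤ} z^n. -/
/-- Generalized binomial coefficient `C(m,j) = m(m-1)⋯(m-j+1)/j!` for `m : ℤ`. -/
noncomputable def cchoose (m : ℤ) (j : ℕ) : ℂ :=
  (∏ t ∈ Finset.range j, ((m : ℂ) - (t : ℂ))) / (j.factorial : ℂ)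

open Finset

lemma prodDesc : ∀ (b a : ℕ), (∏ t ∈ range b, ((a:ℂ) + b - t)) = ((a+b).factorial : ℂ) / (a.factorial : ℂ) := by
  intro b
  induction b with
  | zero =>
    intro a
    have h1 : (a.factorial : ℂ) ≠ 0 := Nat.cast_ne_zero.2 (Nat.factorial_ne_zero a)
    simp [div_self h1]
  | succ b ih =>
    intro a
    rw [Finset.prod_range_succ]
    have hprod : (∏ t ∈ range b, ((a:ℂ) + ((b:ℕ)+1:ℕ) - t)) = ∏ t ∈ range b, (((a+1:ℕ):ℂ) + b - t) := by
      apply Finset.prod_congr rfl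
      intro t _
      push_cast
      ring
    rw [hprod, ih (a+1)]
    have h1 : (a.factorial : ℂ) ≠ 0 := Nat.cast_ne_zero.2 (Nat.factorial_ne_zero a)
    have h2 : ((a+1).factorial : ℂ) ≠ 0 := Nat.cast_ne_zero.2 (Nat.factorial_ne_zero (a+1))
    have e1 : (a + 1 + b) = (a + (b+1)) := by omega
    rw [e1] at *
    rw [Nat.factorial_succ a] at h2 ⊢
    push_cast at h2 ⊢
    field_simp
    ring

lemma prodAsc : ∀ (b i : ℕ), (∏ t ∈ range b, ((i:ℂ) + 1 + t)) = ((i+b).factorial : ℂ) / (i.factorial : ℂ) := by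
  intro b
  induction b with
  | zero =>
    intro i
    have h1 : (i.factorial : ℂ) ≠ 0 := Nat.cast_ne_zero.2 (Nat.factorial_ne_zero i)
    simp [div_self h1]
  | succ b ih =>
    intro i
    rw [Finset.prod_range_succ, ih i]
    have h1 : (i.factorial : ℂ) ≠ 0 := Nat.cast_ne_zero.2 (Nat.factorial_ne_zero i)
    have e1 : (i + (b+1)) = (i + b) + 1 := by omega
    rw [e1, Nat.factorial_succ]
    push_cast
    field_simp
    ring

lemma prodZero (n j : ℕ) (h : n < j) : (∏ t ∈ range j, ((n:ℂ) - t)) = 0 :=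
  Finset.prod_eq_zero (Finset.mem_range.2 h) (by simp)

lemma Dpow (D : (ℤ → ℂ) → (ℤ → ℂ)) (hD : ∀ c m, D c m = (-((m : ℂ) + 1)) * c (m + 1)) :
    ∀ (i : ℕ) (c : ℤ → ℂ) (m : ℤ),
      D^[i] c m = (∏ t ∈ range i, (-((m:ℂ) + t + 1))) * c (m + i) := by
  intro i
  induction i with
  | zero => intro c m; simp
  | succ i ih =>
    intro c m
    rw [Function.iterate_succ_apply, ih (D c) m, hD]
    rw [Finset.prod_range_succ]
    have : (m + ↑i + 1 : ℤ) = m + (↑(i+1) : ℤ) := by push_cast; ring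
    rw [this]
    push_cast
    ring

lemma neg_one_zpow' (n : ℤ) : (-1:ℂ)^n = (-1:ℂ)^(n.natAbs) := by
  rcases Int.natAbs_eq n with h | h
  · conv_lhs => rw [h]
    rw [zpow_natCast]
  · conv_lhs => rw [h]
    rw [zpow_neg, zpow_natCast]
    rcases neg_one_pow_eq_or ℂ n.natAbs with h2 | h2 <;> rw [h2] <;> norm_num

lemma cchoose_zero' (m : ℤ) (j : ℕ) (h0 : 0 ≤ m) (h1 : m < j) : cchoose m j = 0 := by
  obtain ⟨n, rfl⟩ := Int.eq_ofNat_of_zero_le h0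
  unfold cchoose
  have : (∏ t ∈ range j, (((n:ℤ):ℂ) - (t:ℂ))) = ∏ t ∈ range j, ((n:ℂ) - (t:ℂ)) := by
    push_cast; rfl
  rw [this, prodZero n j (by exact_mod_cast h1), zero_div]

lemma cchoose_nonneg (an bn : ℕ) :
    cchoose ((an:ℤ) + bn) bn = ((an+bn).factorial : ℂ) / ((an.factorial : ℂ) * (bn.factorial : ℂ)) := by
  unfold cchoose
  have : (∏ t ∈ range bn, ((((an:ℤ)+bn :ℤ):ℂ) - (t:ℂ))) = ∏ t ∈ range bn, ((an:ℂ) + bn - (t:ℂ)) := by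
    apply Finset.prod_congr rfl; intro t _; push_cast; ring
  rw [this, prodDesc bn an, div_div]

lemma cchoose_neg (i b : ℕ) :
    cchoose (-1 - (i:ℤ)) b = (-1:ℂ)^b * ((i+b).factorial : ℂ) / ((i.factorial : ℂ) * (b.factorial : ℂ)) := by
  unfold cchoose
  have : (∏ t ∈ range b, ((Int.cast (-1 - (i:ℤ)) : ℂ) - (t:ℂ))) = ∏ t ∈ range b, (-1 : ℂ) * ((i:ℂ) + 1 + (t:ℂ)) := by
    apply Finset.prod_congr rfl; intro t _; push_cast; ring
  rw [this, Finset.prod_mul_distrib, Finset.prod_const, prodAsc b i]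
  rw [Finset.card_range]
  field_simp

lemma cchoose_negasc (a i : ℕ) :
    cchoose (-(a:ℤ) - 1) i = (-1:ℂ)^i * ((a+i).factorial : ℂ) / ((a.factorial : ℂ) * (i.factorial : ℂ)) := by
  unfold cchoose
  have : (∏ t ∈ range i, ((Int.cast (-(a:ℤ) - 1) : ℂ) - (t:ℂ))) = ∏ t ∈ range i, (-1 : ℂ) * ((a:ℂ) + 1 + (t:ℂ)) := by
    apply Finset.prod_congr rfl; intro t _; push_cast; ring
  rw [this, Finset.prod_mul_distrib, Finset.prod_const, prodAsc i a]
  rw [Finset.card_range]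
  field_simp

lemma Gzero (iN : ℕ) (g0 : ℤ → ℂ) (hsupp : ∀ m : ℤ, m < -1 → g0 m = 0)
    (D : (ℤ → ℂ) → (ℤ → ℂ)) (hD : ∀ c m, D c m = (-((m : ℂ) + 1)) * c (m + 1))
    (m : ℤ) (hm1 : m ≤ -1) (hm2 : m + iN ≠ -1) : (D^[iN] g0) m = 0 := by
  rw [Dpow D hD]
  by_cases h : m + iN < -1
  · rw [hsupp _ h, mul_zero]
  · have ht : (-m-1).toNat < iN := by omega
    rw [Finset.prod_eq_zero (Finset.mem_range.2 ht), zero_mul]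
    have hc : (((-m-1).toNat : ℤ)) = -m-1 := Int.toNat_of_nonneg (by omega)
    have hc2 : (((-m-1).toNat : ℂ)) = ((-m-1 : ℤ) : ℂ) := by exact_mod_cast congrArg (Int.cast : ℤ → ℂ) hc
    rw [hc2]
    push_cast
    ring

lemma Gval (iN : ℕ) (g0 : ℤ → ℂ) (hg1 : g0 (-1) = 2)
    (D : (ℤ → ℂ) → (ℤ → ℂ)) (hD : ∀ c m, D c m = (-((m : ℂ) + 1)) * c (m + 1)) :
    (D^[iN] g0) (-1 - iN) = (iN.factorial : ℂ) * 2 := by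
  rw [Dpow D hD]
  have h1 : (-1 - (iN:ℤ) + iN) = -1 := by ring
  rw [h1, hg1]
  congr 1
  have : (∏ t ∈ range iN, (-((Int.cast (-1 - (iN:ℤ)) : ℂ) + (t:ℂ) + 1))) = ∏ t ∈ range iN, (((0:ℕ):ℂ) + iN - (t:ℂ)) := by
    apply Finset.prod_congr rfl; intro t _; push_cast; ring
  rw [this, prodDesc iN 0]
  simp

lemma sq_negone (k : ℕ) : ((-1:ℂ)^k) * ((-1:ℂ)^k) = 1 := by
  rw [← pow_add, ← two_mul, pow_mul]
  norm_num


/- STATEMENT 2.  `g0 : ℤ → ℂ` is the coefficient function of the Laurent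
expansion at `z = 0` of `(e^z+1)/(e^z-1)` (support in `m ≥ -1`, convolution
identity `(e^z-1)·g0(z) = e^z+1`), so that
`f_{-i}(e^z) = (1/(2 i!)) (-d/dz)^i ((e^z+1)/(e^z-1))` has coefficient function
`g = (1/(2 i!)) D^[i] g0` where `(D c) m = -(m+1) c (m+1)` is `-d/dz`.
The claim
`ι_{z₁,z₂} f_{-i}(e^{z₁-z₂}) - ι_{z₂,z₁} f_{-i}(e^{z₁-z₂}) = (1/i!) ∂_{z₂}^i (z₁^{-1} δ(z₂/z₁))`
is stated as an identity of the coefficients of `z₁^a z₂^b`: substituting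
`z = z₁ - z₂` into `∑_m g_m z^m` and expanding `(z₁-z₂)^m` binomially in the
region `|z₁|>|z₂|` (resp. `|z₂|>|z₁|`) gives the two sides below, while the
coefficient of `z₁^a z₂^b` in `(1/i!) ∂_{z₂}^i (z₁^{-1}δ(z₂/z₁))` is
`C(-a-1, i)` when `a + b + i = -1` and `0` otherwise. -/
theorem stmt2 (i : ℕ) (g0 : ℤ → ℂ)
    (hsupp : ∀ m : ℤ, m < -1 → g0 m = 0)
    (hconv : ∀ m : ℤ,
      (∑ j ∈ Finset.Icc 1 (m + 2).toNat, (1 / (j.factorial : ℂ)) * g0 (m - (j : ℤ)))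
        = if m = 0 then 2 else if 1 ≤ m then 1 / ((m.toNat).factorial : ℂ) else 0)
    (D : (ℤ → ℂ) → (ℤ → ℂ)) (hD : ∀ c m, D c m = (-((m : ℂ) + 1)) * c (m + 1)) :
    ∀ a b : ℤ,
      (if 0 ≤ b then
          (-1 : ℂ) ^ b * cchoose (a + b) b.toNat *
            ((1 / (2 * (i.factorial : ℂ))) * (D^[i] g0) (a + b))
        else 0)
      - (if 0 ≤ a then
          (-1 : ℂ) ^ b * cchoose (a + b) a.toNat *
            ((1 / (2 * (i.factorial : ℂ))) * (D^[i] g0) (a + b))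
        else 0)
      = if a + b + (i : ℤ) = -1 then cchoose (-a - 1) i else 0 := by
  have hfact : ((i.factorial : ℂ)) ≠ 0 := Nat.cast_ne_zero.2 (Nat.factorial_ne_zero i)
  have hg1 : g0 (-1) = 2 := by
    have h0 := hconv 0
    have he : Finset.Icc (1:ℕ) ((0 + 2 : ℤ)).toNat = {1, 2} := by decide
    rw [he] at h0
    rw [Finset.sum_insert (by decide), Finset.sum_singleton] at h0
    have h2 : g0 (0 - (2:ℕ)) = 0 := hsupp _ (by norm_num)
    rw [h2] at h0
    norm_num at h0
    exact h0
  intro a b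
  rcases le_or_gt 0 a with ha | ha <;> rcases le_or_gt 0 b with hb | hb
  · -- both nonneg
    have hm : ¬ (a + b + (i:ℤ) = -1) := by omega
    rw [if_pos hb, if_pos ha, if_neg hm]
    obtain ⟨an, rfl⟩ := Int.eq_ofNat_of_zero_le ha
    obtain ⟨bn, rfl⟩ := Int.eq_ofNat_of_zero_le hb
    have e1 : ((bn:ℤ)).toNat = bn := by omega
    have e2 : ((an:ℤ)).toNat = an := by omega
    rw [e1, e2, cchoose_nonneg an bn]
    have e3 : ((an:ℤ) + bn) = ((bn:ℤ) + an) := by ring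
    rw [e3, cchoose_nonneg bn an]
    have e4 : (bn + an) = (an + bn) := by omega
    rw [e4]
    ring
  · -- a ≥ 0, b < 0
    rw [if_neg (not_le.2 hb), if_pos ha, zero_sub]
    obtain ⟨an, rfl⟩ := Int.eq_ofNat_of_zero_le ha
    have e2 : ((an:ℤ)).toNat = an := by omega
    rw [e2]
    by_cases hm : (an:ℤ) + b + (i:ℤ) = -1
    · rw [if_pos hm]
      have hb' : b = -1 - (i:ℤ) - an := by omega
      subst hb'
      have e3 : ((an:ℤ) + (-1 - (i:ℤ) - an)) = -1 - (i:ℤ) := by ring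
      rw [e3, Gval i g0 hg1 D hD, cchoose_neg i an, cchoose_negasc an i]
      have hsgn : (-1:ℂ)^(-1 - (i:ℤ) - an) = (-1:ℂ)^(1 + i + an) := by
        rw [neg_one_zpow']
        congr 1
        omega
      rw [hsgn, pow_add, pow_add, pow_one]
      have han : ((an.factorial : ℂ)) ≠ 0 := Nat.cast_ne_zero.2 (Nat.factorial_ne_zero an)
      field_simp
      rw [show (an + i) = (i + an) by omega]
      ring_nf
      simp only [pow_mul', neg_one_sq, one_pow]
      ring
    · rw [if_neg hm]
      rcases le_or_gt 0 ((an:ℤ) + b) with hm0 | hm0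
      · rw [cchoose_zero' _ _ hm0 (by omega), mul_zero, zero_mul, neg_zero]
      · rw [Gzero i g0 hsupp D hD _ (by omega) (by omega), mul_zero, mul_zero, neg_zero]
  · -- a < 0, b ≥ 0
    rw [if_pos hb, if_neg (not_le.2 ha), sub_zero]
    obtain ⟨bn, rfl⟩ := Int.eq_ofNat_of_zero_le hb
    have e2 : ((bn:ℤ)).toNat = bn := by omega
    rw [e2, show ((-1:ℂ))^((bn:ℤ)) = (-1:ℂ)^bn from zpow_natCast _ _]
    by_cases hm : a + (bn:ℤ) + (i:ℤ) = -1
    · rw [if_pos hm]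
      have ha' : a = -1 - (i:ℤ) - bn := by omega
      subst ha'
      have e3 : ((-1 - (i:ℤ) - bn) + bn) = -1 - (i:ℤ) := by ring
      rw [e3, Gval i g0 hg1 D hD, cchoose_neg i bn]
      have e4 : (-(-1 - (i:ℤ) - bn) - 1) = ((bn:ℤ) + i) := by ring
      rw [e4, cchoose_nonneg bn i]
      have hbn : ((bn.factorial : ℂ)) ≠ 0 := Nat.cast_ne_zero.2 (Nat.factorial_ne_zero bn)
      field_simp
      rw [show (bn + i) = (i + bn) by omega]
      ring_nf
      simp only [pow_mul', neg_one_sq, one_pow]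
      ring
    · rw [if_neg hm]
      rcases le_or_gt 0 (a + (bn:ℤ)) with hm0 | hm0
      · rw [cchoose_zero' _ _ hm0 (by omega), mul_zero, zero_mul]
      · rw [Gzero i g0 hsupp D hD _ (by omega) (by omega), mul_zero, mul_zero]
  · -- both neg
    rw [if_neg (not_le.2 hb), if_neg (not_le.2 ha), sub_zero]
    by_cases hm : a + b + (i:ℤ) = -1
    · rw [if_pos hm, cchoose_zero' _ _ (by omega) (by omega)]
    · rw [if_neg hm]
end

section
/- Let q = exp ħ, q_i = q^{r_i} with r_i a positive integer, a ∈ ℤ, k ∈ ℕ, and set f_{ii}(z) = (q_i^{-1} e^{z/2} − q_i e^{−z/2})/(e^{z/2} − e^{−z/2}) when a_{ii}=2, and f_{ij}(z) = q_i^{−a/2} e^{z/2} − q_i^{a/2} e^{−z/2} (for i≠j with a_{ij}=a ≤ 0). Then the telescoping product identity holds: f_{ij}(z)·∏_{b=1}^{k} f_{ii}(z − r_i(2(b−1)+a)ħ) = q_i^{−k−a/2} e^{z/2} − q_i^{k+a/2} e^{−z/2}, as elements of ℂ((z))[[ħ]]. -/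
noncomputable section

/-- `ℂ((z))`. -/
abbrev K : Type := LaurentSeries ℂ

/-- `ℂ((z))[[ħ]]`. -/
abbrev Ah : Type := PowerSeries K

/-- `e^{cz} ∈ ℂ((z))` (formal exponential). -/
def Ez (c : ℂ) : K :=
  (HahnSeries.ofPowerSeries ℤ ℂ) (PowerSeries.rescale c (PowerSeries.exp ℂ))

/-- `e^{cħ} ∈ ℂ((z))[[ħ]]`. -/
def EH (c : ℂ) : Ah :=
  PowerSeries.rescale (algebraMap ℂ K c) (PowerSeries.exp K)

/-- Constants `ℂ((z)) → ℂ((z))[[ħ]]`. -/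
def CK : K →+* Ah := PowerSeries.C (R := K)

lemma EH_mul (c d : ℂ) : EH c * EH d = EH (c + d) := by
  unfold EH
  rw [PowerSeries.exp_mul_exp_eq_exp_add, map_add]

lemma EH_zero : EH 0 = 1 := by
  unfold EH
  rw [map_zero, PowerSeries.rescale_zero]
  simp

lemma constantCoeff_EH (c : ℂ) : PowerSeries.constantCoeff (R := K) (EH c) = 1 := by
  unfold EH
  rw [← PowerSeries.coeff_zero_eq_constantCoeff_apply, PowerSeries.coeff_rescale]
  simp

lemma Ez_sub_ne : Ez (1 / 2) - Ez (-(1 / 2)) ≠ 0 := by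
  unfold Ez
  rw [← map_sub]
  intro h
  have h2 := congrArg (PowerSeries.coeff (R := ℂ) 1)
    (HahnSeries.ofPowerSeries_injective (h.trans (map_zero _).symm))
  simp only [map_sub, PowerSeries.coeff_rescale, PowerSeries.coeff_exp, map_zero] at h2
  norm_num at h2

lemma key_unit (x y : ℂ) :
    IsUnit (EH x * CK (Ez (1 / 2)) - EH y * CK (Ez (-(1 / 2)))) := by
  rw [PowerSeries.isUnit_iff_constantCoeff]
  simp only [map_sub, map_mul, constantCoeff_EH, one_mul]
  have : PowerSeries.constantCoeff (R := K) (CK (Ez (1 / 2))) = Ez (1 / 2) :=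
    PowerSeries.constantCoeff_C _
  have : ∀ c : ℂ, PowerSeries.constantCoeff (R := K) (CK (Ez c)) = Ez c := fun c =>
    PowerSeries.constantCoeff_C _
  rw [this, this]
  exact (Ez_sub_ne).isUnit

lemma unit_shuffle (u A : Ah) (hu : IsUnit u) : u * (A * Ring.inverse u) = A := by
  rw [mul_comm A, ← mul_assoc, Ring.mul_inverse_cancel u hu, one_mul]

/- STATEMENT 5. -/
set_option maxHeartbeats 1000000 in
theorem stmt5 (ri : ℕ) (hri : 0 < ri) (a : ℤ) (ha : a ≤ 0) (k : ℕ) :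
    -- `q_i^c := e^{r_i c ħ}`
    let qi : ℂ → Ah := fun c => EH ((ri : ℂ) * c)
    -- `e^{(z - sħ)/2}` and `e^{-(z - sħ)/2}`
    let Ep : ℂ → Ah := fun s => CK (Ez (1 / 2)) * EH (-s / 2)
    let Em : ℂ → Ah := fun s => CK (Ez (-(1 / 2))) * EH (s / 2)
    -- `f_{ii}(z - sħ)`
    let fii : ℂ → Ah := fun s =>
      (qi (-1) * Ep s - qi 1 * Em s) * Ring.inverse (Ep s - Em s)
    -- `f_{ij}(z)`
    let fij : Ah := qi (-(a : ℂ) / 2) * CK (Ez (1 / 2)) - qi ((a : ℂ) / 2) * CK (Ez (-(1 / 2)))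
    fij * ∏ b ∈ Finset.range k, fii ((ri : ℂ) * (2 * (b : ℂ) + (a : ℂ)))
      = qi (-(k : ℂ) - (a : ℂ) / 2) * CK (Ez (1 / 2))
        - qi ((k : ℂ) + (a : ℂ) / 2) * CK (Ez (-(1 / 2))) := by
  intro qi Ep Em fii fij
  induction k with
  | zero =>
      have h1 : (-((0:ℕ) : ℂ) - (a : ℂ) / 2) = -(a : ℂ) / 2 := by push_cast; ring
      have h2 : (((0:ℕ) : ℂ) + (a : ℂ) / 2) = (a : ℂ) / 2 := by push_cast; ring
      rw [Finset.range_zero, Finset.prod_empty, mul_one, h1, h2]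
  | succ k ih =>
      rw [Finset.prod_range_succ, ← mul_assoc, ih]
      set s : ℂ := (ri : ℂ) * (2 * (k : ℂ) + (a : ℂ)) with hs
      have hden : Ep s - Em s
          = qi (-(k : ℂ) - (a : ℂ) / 2) * CK (Ez (1 / 2))
            - qi ((k : ℂ) + (a : ℂ) / 2) * CK (Ez (-(1 / 2))) := by
        simp only [Ep, Em, qi, hs]
        rw [mul_comm (CK (Ez (1 / 2))), mul_comm (CK (Ez (-(1 / 2))))]
        congr 3 <;> push_cast <;> ring
      have hnum : qi (-1) * Ep s - qi 1 * Em s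
          = qi (-((k + 1 : ℕ) : ℂ) - (a : ℂ) / 2) * CK (Ez (1 / 2))
            - qi (((k + 1 : ℕ) : ℂ) + (a : ℂ) / 2) * CK (Ez (-(1 / 2))) := by
        simp only [Ep, Em, qi, hs]
        rw [mul_comm (CK (Ez (1 / 2))), mul_comm (CK (Ez (-(1 / 2)))), ← mul_assoc,
          ← mul_assoc, EH_mul, EH_mul]
        congr 3 <;> push_cast <;> ring
      have hunit : IsUnit (Ep s - Em s) := by
        rw [hden]; exact key_unit _ _
      rw [← hden]
      show (Ep s - Em s) * ((qi (-1) * Ep s - qi 1 * Em s) * Ring.inverse (Ep s - Em s)) = _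
      rw [unit_shuffle _ _ hunit, hnum]

end
end

section
/- Let W be a vector space, and let a(z), b(z) ∈ Hom(W, W((z))) be fields such that for some k ∈ ℕ, (z₁−z₂)^k a(z₁)b(z₂) ∈ Hom(W, W((z₁,z₂))). Define the n-th product a(z)_n b(z) by Y_E(a(z), z₀)b(z) = z₀^{−k}((z₁−z)^k a(z₁)b(z))|_{z₁ = z + z₀}, expanded in z₀. Then this definition is independent of the choice of k: if both k and k' ≥ k satisfy the hypothesis, the two resulting expressions for Y_E(a(z), z₀)b(z) coincide. -/
noncomputable section

/-- Generalized binomial coefficient `C(m,j)` for `m : ℤ`, as a rational. -/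
def qchoose (m : ℤ) (j : ℕ) : ℚ :=
  (∏ t ∈ Finset.range j, ((m : ℚ) - (t : ℚ))) / (j.factorial : ℚ)

variable {W : Type*} [AddCommGroup W] [Module ℚ W]

/-- Joint lower truncation: membership in `W((z₁,z₂))`. -/
def JT (B : ℤ → ℤ → W) : Prop :=
  ∃ N : ℤ, ∀ m n : ℤ, (m < N ∨ n < N) → B m n = 0

/-- The coefficients of `(z₁-z₂)^k · A(z₁,z₂)`. -/
def mulSub (k : ℕ) (A : ℤ → ℤ → W) : ℤ → ℤ → W := fun m n =>
  ∑ i ∈ Finset.range (k + 1),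
    ((-1 : ℤ) ^ i * (k.choose i : ℤ)) • A (m - ((k - i : ℕ) : ℤ)) (n - (i : ℤ))

/-- The coefficient of `z^p z₀^j` of `B(z+z₀, z)`, where `(z+z₀)^m` is expanded
in nonnegative powers of `z₀` via the binomial series. -/
def subst (B : ℤ → ℤ → W) (p : ℤ) (j : ℕ) : W :=
  ∑ᶠ m : ℤ, qchoose m j • B m (p - m + (j : ℤ))

/-! ### Auxiliary material -/

lemma qchoose_zero' (m : ℤ) : qchoose m 0 = 1 := by simp [qchoose]

lemma qchoose_pascal (m : ℤ) (j : ℕ) :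
    qchoose (m + 1) (j + 1) - qchoose m (j + 1) = qchoose m j := by
  unfold qchoose
  have h1 : (∏ t ∈ Finset.range (j + 1), (((m + 1 : ℤ) : ℚ) - (t : ℚ)))
      = ((m : ℚ) + 1) * ∏ t ∈ Finset.range j, ((m : ℚ) - (t : ℚ)) := by
    rw [Finset.prod_range_succ']
    push_cast
    ring_nf
  have h2 : (∏ t ∈ Finset.range (j + 1), ((m : ℚ) - (t : ℚ)))
      = (∏ t ∈ Finset.range j, ((m : ℚ) - (t : ℚ))) * ((m : ℚ) - (j : ℚ)) := by
    rw [Finset.prod_range_succ]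
  rw [h1, h2, Nat.factorial_succ]
  have hj : (j.factorial : ℚ) ≠ 0 := by exact_mod_cast j.factorial_ne_zero
  have hj1 : ((j : ℚ) + 1) ≠ 0 := by positivity
  push_cast
  field_simp
  ring

lemma mulSub_zero' (A : ℤ → ℤ → W) : mulSub 0 A = A := by
  funext m n; simp [mulSub]

lemma mulSub_succ (k : ℕ) (A : ℤ → ℤ → W) (m n : ℤ) :
    mulSub (k + 1) A m n = mulSub k A (m - 1) n - mulSub k A m (n - 1) := by
  have h1 : mulSub k A (m - 1) n
      = ∑ i ∈ Finset.range (k + 2),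
          ((-1 : ℤ) ^ i * (k.choose i : ℤ)) • A (m - ((k + 1 - i : ℕ) : ℤ)) (n - (i : ℤ)) := by
    rw [Finset.sum_range_succ]
    have hz : (k.choose (k + 1) : ℤ) = 0 := by simp
    rw [hz]
    simp only [mul_zero, zero_smul, add_zero]
    apply Finset.sum_congr rfl
    intro i hi
    rw [Finset.mem_range] at hi
    congr 2
    have : (k + 1 - i : ℕ) = (k - i) + 1 := by omega
    rw [this]
    push_cast [Nat.cast_sub (by omega : i ≤ k)]
    ring
  have h2 : mulSub k A m (n - 1)
      = -∑ i ∈ Finset.range (k + 2),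
          ((-1 : ℤ) ^ i * (if i = 0 then 0 else (k.choose (i - 1) : ℤ)))
            • A (m - ((k + 1 - i : ℕ) : ℤ)) (n - (i : ℤ)) := by
    rw [Finset.sum_range_succ']
    norm_num
    rw [← Finset.sum_neg_distrib]
    apply Finset.sum_congr rfl
    intro i hi
    rw [Finset.mem_range] at hi
    have e3 : (k + 1 - (i + 1) : ℕ) = k - i := by omega
    rw [e3]
    rw [← neg_smul]
    congr 1
    · push_cast; ring
    · congr 1 <;> push_cast <;> ring
  rw [h1, h2, sub_neg_eq_add, ← Finset.sum_add_distrib]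
  unfold mulSub
  apply Finset.sum_congr rfl
  intro i hi
  rw [← add_smul]
  congr 1
  rcases i with _ | i
  · simp
  · rw [if_neg (by omega)]
    have : (i + 1 - 1 : ℕ) = i := rfl
    rw [this, Nat.choose_succ_succ']
    push_cast
    ring

lemma mulSub_add (a b : ℕ) (A : ℤ → ℤ → W) :
    mulSub (a + b) A = mulSub a (mulSub b A) := by
  induction a with
  | zero => rw [Nat.zero_add, mulSub_zero']
  | succ a ih =>
    funext m n
    have : a + 1 + b = (a + b) + 1 := by omega
    rw [this, mulSub_succ, mulSub_succ, ih]

lemma JT.mulSub_stable {B : ℤ → ℤ → W} (hB : JT B) (k : ℕ) : JT (mulSub k B) := by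
  obtain ⟨N, hN⟩ := hB
  refine ⟨N, fun m n hmn => ?_⟩
  unfold mulSub
  apply Finset.sum_eq_zero
  intro i hi
  rw [hN, smul_zero]
  rcases hmn with h | h
  · left; omega
  · right
    rw [Finset.mem_range] at hi
    omega

lemma supp_fin {f : ℤ → W} (a b : ℤ) (h : ∀ m, f m ≠ 0 → a ≤ m ∧ m ≤ b) :
    (Function.support f).Finite :=
  Set.Finite.subset (Set.finite_Icc a b) (fun m hm => Set.mem_Icc.2 (h m hm))

lemma subst_mulSub_one {B : ℤ → ℤ → W} (hB : JT B) (p : ℤ) (j : ℕ) :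
    subst (mulSub 1 B) p j = if 1 ≤ j then subst B p (j - 1) else 0 := by
  obtain ⟨N, hN⟩ := hB
  have hmul : ∀ m n : ℤ, mulSub 1 B m n = B (m - 1) n - B m (n - 1) := by
    intro m n
    simp [mulSub, Finset.sum_range_succ, sub_eq_add_neg]
  have h1 : (Function.support fun m : ℤ => qchoose m j • B (m - 1) (p - m + (j : ℤ))).Finite := by
    apply supp_fin (N + 1) (p + j - N)
    intro m hm
    have hne : B (m - 1) (p - m + (j : ℤ)) ≠ 0 := fun h => hm (by rw [h, smul_zero])
    have hb : ¬(m - 1 < N ∨ p - m + (j : ℤ) < N) := fun hc => hne (hN _ _ hc)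
    omega
  have h2 : (Function.support fun m : ℤ => qchoose m j • B m (p - m + (j : ℤ) - 1)).Finite := by
    apply supp_fin N (p + j - 1 - N)
    intro m hm
    have hne : B m (p - m + (j : ℤ) - 1) ≠ 0 := fun h => hm (by rw [h, smul_zero])
    have hb : ¬(m < N ∨ p - m + (j : ℤ) - 1 < N) := fun hc => hne (hN _ _ hc)
    omega
  have h1' : (Function.support fun m : ℤ =>
      qchoose (m + 1) j • B m (p - m + (j : ℤ) - 1)).Finite := by
    apply supp_fin N (p + j - 1 - N)
    intro m hm
    have hne : B m (p - m + (j : ℤ) - 1) ≠ 0 := fun h => hm (by rw [h, smul_zero])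
    have hb : ¬(m < N ∨ p - m + (j : ℤ) - 1 < N) := fun hc => hne (hN _ _ hc)
    omega
  have step1 : subst (mulSub 1 B) p j
      = (∑ᶠ m : ℤ, qchoose m j • B (m - 1) (p - m + (j : ℤ)))
        - ∑ᶠ m : ℤ, qchoose m j • B m (p - m + (j : ℤ) - 1) := by
    rw [← finsum_sub_distrib h1 h2]
    apply finsum_congr
    intro m
    rw [hmul, smul_sub]
  have step2 : (∑ᶠ m : ℤ, qchoose m j • B (m - 1) (p - m + (j : ℤ)))
      = ∑ᶠ m : ℤ, qchoose (m + 1) j • B m (p - m + (j : ℤ) - 1) := by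
    rw [← finsum_comp_equiv (Equiv.addRight (1 : ℤ))]
    apply finsum_congr
    intro m
    simp only [Equiv.coe_addRight]
    congr 2
    · ring
    · ring
  have step3 : subst (mulSub 1 B) p j
      = ∑ᶠ m : ℤ, (qchoose (m + 1) j - qchoose m j) • B m (p - m + (j : ℤ) - 1) := by
    rw [step1, step2, ← finsum_sub_distrib h1' h2]
    apply finsum_congr
    intro m
    rw [sub_smul]
  cases j with
  | zero =>
    rw [if_neg (by omega), step3]
    have hz : ∀ m : ℤ,
        (qchoose (m + 1) 0 - qchoose m 0) • B m (p - m + ((0 : ℕ) : ℤ) - 1) = 0 := by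
      intro m
      rw [qchoose_zero', qchoose_zero', sub_self, zero_smul]
    rw [finsum_congr hz, finsum_zero]
  | succ j' =>
    rw [if_pos (by omega), step3]
    show _ = subst B p j'
    unfold subst
    apply finsum_congr
    intro m
    rw [qchoose_pascal]
    congr 1
    push_cast
    ring

lemma subst_mulSub {B : ℤ → ℤ → W} (hB : JT B) (d : ℕ) (p : ℤ) (j : ℕ) :
    subst (mulSub d B) p j = if d ≤ j then subst B p (j - d) else 0 := by
  induction d generalizing j with
  | zero => rw [mulSub_zero', if_pos (by omega), Nat.sub_zero]
  | succ d ih =>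
    have hsplit : (d + 1 : ℕ) = 1 + d := by omega
    rw [hsplit, mulSub_add, subst_mulSub_one (hB.mulSub_stable d) p j]
    by_cases h1 : 1 ≤ j
    · rw [if_pos h1, ih (j - 1)]
      by_cases h2 : d ≤ j - 1
      · rw [if_pos h2, if_pos (by omega), Nat.sub_sub, Nat.add_comm]
      · rw [if_neg h2, if_neg (by omega)]
    · rw [if_neg h1, if_neg (by omega)]

/- STATEMENT 18.  Let `a(z₁)b(z₂)` have coefficients `A m n` (of `z₁^m z₂^n`),
lower truncated in `z₂` and, for each power of `z₂`, in `z₁`, and suppose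
`(z₁-z₂)^k a(z₁)b(z₂) ∈ W((z₁,z₂))`.  Then for any `k' ≥ k`,
`((z₁-z)^{k'} a(z₁)b(z))|_{z₁=z+z₀} = z₀^{k'-k}·((z₁-z)^{k} a(z₁)b(z))|_{z₁=z+z₀}`,
so the definition of `Y_E(a(z),z₀)b(z)` (which divides by `z₀^k`) is
independent of the choice of `k`. -/
theorem stmt18 (A : ℤ → ℤ → W) (k k' : ℕ) (hkk' : k ≤ k')
    (hA2 : ∃ N : ℤ, ∀ n : ℤ, n < N → ∀ m : ℤ, A m n = 0)
    (hA1 : ∀ n : ℤ, ∃ N : ℤ, ∀ m : ℤ, m < N → A m n = 0)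
    (hk : JT (mulSub k A)) :
    ∀ (p : ℤ) (j : ℕ),
      subst (mulSub k' A) p j =
        if k' - k ≤ j then subst (mulSub k A) p (j - (k' - k)) else 0 := by
  intro p j
  have hk' : mulSub k' A = mulSub (k' - k) (mulSub k A) := by
    rw [← mulSub_add, Nat.sub_add_cancel hkk']
  rw [hk']
  exact subst_mulSub hk (k' - k) p j

end
end
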